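/- Let G be a finite group, S ⊆ G, and let Ĝ = {x ↦ x·g : g ∈ G} be the right regular representation of G inside the symmetric group on G. Then Ĝ is contained in Aut(Cay(G,S)), and the normalizer of Ĝ in Aut(Cay(G,S)) is exactly the set of permutations of G of the form x ↦ φ(x)·g with φ ∈ Aut(G,S) and g ∈ G (the internal semidirect product Aut(G,S) ⋉ Ĝ). -/
import Mathlib


/-! Common definitions: Cayley digraphs, digraph automorphism groups,
DRRs/GRRs, detecting groups, the regular representation, the group `W(G,N)`,
wreath and cartesian products of digraphs, and the wreath product of groups. -/

universe u

/-- The adjacency relation of the Cayley digraph `Cay(G,S)`: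
there is a directed edge from `g₁` to `g₂` iff `g₂ = s * g₁` for some `s ∈ S`. -/
def cayAdj {G : Type*} [Group G] (S : Set G) : G → G → Prop :=
  fun g₁ g₂ => ∃ s ∈ S, g₂ = s * g₁

/-- The automorphism group of a digraph (given by its adjacency relation),
as a subgroup of the symmetric group on the vertices. -/
def digraphAut {V : Type*} (Adj : V → V → Prop) : Subgroup (Equiv.Perm V) where
  carrier := {σ | ∀ x y, Adj (σ x) (σ y) ↔ Adj x y}
  one_mem' := fun _ _ => Iff.rfl
  mul_mem' := by
    intro σ τ hσ hτ x y
    simp only [Equiv.Perm.mul_apply]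
    exact (hσ _ _).trans (hτ _ _)
  inv_mem' := by
    intro σ hσ x y
    have h := (hσ (σ⁻¹ x) (σ⁻¹ y)).symm
    simpa using h

/-- A digraph is a DRR (digraphical regular representation) of the group `G` if its
automorphism group is isomorphic to `G` and acts regularly on the vertex set. -/
def IsDRR (G : Type*) [Group G] {V : Type*} (Adj : V → V → Prop) : Prop :=
  Nonempty (digraphAut Adj ≃* G) ∧
    ∀ v w : V, ∃! σ : digraphAut Adj, (σ : Equiv.Perm V) v = w

/-- A GRR (graphical regular representation) of `G` is a DRR that is a graph. -/
def IsGRR (G : Type*) [Group G] {V : Type*} (Adj : V → V → Prop) : Prop :=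
  Symmetric Adj ∧ IsDRR G Adj

/-- `Aut(G,S)` is trivial: the only group automorphism `φ` of `G` with `φ(S) = S`
is the identity. -/
def AutGSTrivial {G : Type*} [Group G] (S : Set G) : Prop :=
  ∀ φ : MulAut G, ⇑φ '' S = S → φ = 1

/-- `G` is DRR-detecting: for every `S ⊆ G`, if `Aut(G,S) = 1` then
`Cay(G,S)` is a DRR of `G`. -/
def DRRDetecting (G : Type*) [Group G] : Prop :=
  ∀ S : Set G, AutGSTrivial S → IsDRR G (cayAdj S)

/-- `G` is GRR-detecting: for every inverse-closed `S ⊆ G`, if `Aut(G,S) = 1` then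
`Cay(G,S)` is a GRR of `G`. -/
def GRRDetecting (G : Type*) [Group G] : Prop :=
  ∀ S : Set G, (∀ s ∈ S, s⁻¹ ∈ S) → AutGSTrivial S → IsGRR G (cayAdj S)

/-- `G` admits a DRR (equivalently, some Cayley digraph of `G` is a DRR). -/
def HasDRR (G : Type*) [Group G] : Prop :=
  ∃ S : Set G, IsDRR G (cayAdj S)

/-- `G` admits a GRR (equivalently, some Cayley graph of `G` is a GRR). -/
def HasGRR (G : Type*) [Group G] : Prop :=
  ∃ S : Set G, (∀ s ∈ S, s⁻¹ ∈ S) ∧ IsGRR G (cayAdj S)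

/-- The right regular representation `Ĝ = {x ↦ x·g : g ∈ G}` of `G`,
as a subgroup of the symmetric group on `G`. -/
def regularRep (G : Type*) [Group G] : Subgroup (Equiv.Perm G) where
  carrier := {σ | ∃ g : G, ∀ x, σ x = x * g}
  one_mem' := ⟨1, fun x => (mul_one x).symm⟩
  mul_mem' := by
    rintro σ τ ⟨g, hg⟩ ⟨h, hh⟩
    exact ⟨h * g, fun x => by
      simp only [Equiv.Perm.mul_apply, hg, hh, mul_assoc]⟩
  inv_mem' := by
    rintro σ ⟨g, hg⟩
    refine ⟨g⁻¹, fun x => ?_⟩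
    have h1 : σ (x * g⁻¹) = x := by rw [hg]; group
    calc σ⁻¹ x = σ⁻¹ (σ (x * g⁻¹)) := by rw [h1]
      _ = x * g⁻¹ := by simp

/-- The set `W(G,N)` of all permutations `φ_{c,f} : x ↦ x·c·f(x̄)` of `G`,
where `c ∈ G` and `f : G/N → N`. -/
def Wset (G : Type*) [Group G] (N : Subgroup G) [N.Normal] : Set (Equiv.Perm G) :=
  {σ | ∃ (c : G) (f : G ⧸ N → G), (∀ q, f q ∈ N) ∧
      ∀ x : G, σ x = x * c * f (QuotientGroup.mk x)}

/-- The wreath product `X ≀ Y` of two digraphs. -/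
def wreathAdj {X Y : Type*} (A : X → X → Prop) (B : Y → Y → Prop) :
    X × Y → X × Y → Prop :=
  fun p q => A p.1 q.1 ∨ (p.1 = q.1 ∧ B p.2 q.2)

/-- The cartesian product `X □ Y` of two digraphs. -/
def cartAdj {X Y : Type*} (A : X → X → Prop) (B : Y → Y → Prop) :
    X × Y → X × Y → Prop :=
  fun p q => (p.1 = q.1 ∧ B p.2 q.2) ∨ (p.2 = q.2 ∧ A p.1 q.1)

/-- A digraph is prime with respect to the cartesian product if it has more than one
vertex and is not isomorphic to a cartesian product of two digraphs,
each with more than one vertex. -/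
def IsPrimeDigraph {V : Type u} (Adj : V → V → Prop) : Prop :=
  (∃ x y : V, x ≠ y) ∧
    ¬ ∃ (X Y : Type u) (A : X → X → Prop) (B : Y → Y → Prop) (e : V ≃ X × Y),
        (∃ x₁ x₂ : X, x₁ ≠ x₂) ∧ (∃ y₁ y₂ : Y, y₁ ≠ y₂) ∧
          ∀ v w : V, Adj v w ↔ cartAdj A B (e v) (e w)

/-- A digraph is weakly connected if any two vertices are joined by a path in the
underlying undirected graph. -/
def WeaklyConnected {V : Type*} (Adj : V → V → Prop) : Prop :=
  ∀ x y : V, Relation.ReflTransGen (fun a b => Adj a b ∨ Adj b a) x y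

/-- Translation of coordinates: the automorphism `v ↦ (x ↦ v (x * q))`
of the group `Q → N`. -/
def transAut {Q N : Type*} [Group Q] [Group N] (q : Q) : (Q → N) ≃* (Q → N) where
  toFun v := fun x => v (x * q)
  invFun v := fun x => v (x * q⁻¹)
  left_inv v := funext fun x => by simp [mul_assoc]
  right_inv v := funext fun x => by simp [mul_assoc]
  map_mul' v w := rfl

/-- The action of `Q` on `Q → N` by translating coordinates, as a homomorphism
`Q →* MulAut (Q → N)`. -/
def transHom (Q N : Type*) [Group Q] [Group N] : Q →* MulAut (Q → N) where
  toFun := transAut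
  map_one' := by
    ext v x
    simp [transAut]
  map_mul' q₁ q₂ := by
    ext v x
    simp [transAut, mul_assoc, MulAut.mul_apply]

/-- The wreath product `Q ≀ N` of two groups: the semidirect product
`N^Q ⋊ Q`, with `Q` acting on `N^Q` by translating the coordinates. -/
abbrev WreathProd (Q N : Type*) [Group Q] [Group N] :=
  SemidirectProduct (Q → N) Q (transHom Q N)

lemma mem_digraphAut' {V : Type*} {Adj : V → V → Prop} {σ : Equiv.Perm V} :
    σ ∈ digraphAut Adj ↔ ∀ x y, Adj (σ x) (σ y) ↔ Adj x y := Iff.rfl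

lemma mem_regularRep' {G : Type*} [Group G] {σ : Equiv.Perm G} :
    σ ∈ regularRep G ↔ ∃ g : G, ∀ x, σ x = x * g := Iff.rfl

/-- The right regular representation `Ĝ` is contained in
`Aut(Cay(G,S))`, and the normalizer of `Ĝ` in `Aut(Cay(G,S))` consists exactly of the
permutations `x ↦ φ(x)·g` with `φ ∈ Aut(G,S)` and `g ∈ G`. -/
theorem regularRep_le_and_normalizer_eq {G : Type*} [Group G] [Fintype G] (S : Set G) :
    regularRep G ≤ digraphAut (cayAdj S) ∧
      (↑(Subgroup.normalizer (regularRep G) ⊓ digraphAut (cayAdj S)) :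
          Set (Equiv.Perm G)) =
        {σ : Equiv.Perm G | ∃ (φ : MulAut G) (g : G),
          ⇑φ '' S = S ∧ ∀ x : G, σ x = φ x * g} := by
  constructor
  · rintro σ ⟨g, hg⟩
    intro x y
    constructor
    · rintro ⟨s, hs, h⟩
      refine ⟨s, hs, ?_⟩
      have h' : y * g = (s * x) * g := by rw [hg, hg] at h; rw [h]; group
      exact mul_right_cancel h'
    · rintro ⟨s, hs, h⟩
      exact ⟨s, hs, by rw [hg, hg, h]; group⟩
  · ext σ
    simp only [Subgroup.coe_inf, Set.mem_inter_iff, SetLike.mem_coe, Set.mem_setOf_eq]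
    constructor
    · rintro ⟨hnorm, hadj⟩
      set g : G := σ 1 with hgdef
      -- key multiplicativity relation
      have hkey : ∀ h x : G, σ (x * h) = σ x * (g⁻¹ * σ h) := by
        intro h x
        have hmem : (⟨fun y => y * h, fun y => y * h⁻¹, fun y => by group, fun y => by group⟩ :
            Equiv.Perm G) ∈ regularRep G := ⟨h, fun _ => rfl⟩
        obtain ⟨k, hk⟩ := (Subgroup.mem_normalizer_iff.mp hnorm _).mp hmem
        have hk' : ∀ y : G, σ (y * h) = σ y * k := by
          intro y
          have := hk (σ y)
          simpa using this
        have hk1 : σ h = g * k := by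
          have := hk' 1
          simpa [hgdef] using this
        rw [hk' x, hk1]; group
      -- define the automorphism φ : x ↦ σ x * g⁻¹
      have hmul : ∀ x y : G, σ (x * y) * g⁻¹ = (σ x * g⁻¹) * (σ y * g⁻¹) := by
        intro x y
        rw [hkey y x]; group
      refine ⟨{ toFun := fun x => σ x * g⁻¹,
                invFun := fun y => σ⁻¹ (y * g),
                left_inv := fun x => by simp,
                right_inv := fun y => by simp,
                map_mul' := hmul }, g, ?_, fun x => by simp⟩
      -- φ '' S = S
      have hA : ∀ x y, cayAdj S (σ x) (σ y) ↔ cayAdj S x y := hadj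
      ext t
      simp only [Set.mem_image, MulEquiv.coe_mk, Equiv.coe_fn_mk]
      constructor
      · rintro ⟨s, hs, rfl⟩
        have h1 : cayAdj S 1 s := ⟨s, hs, by group⟩
        obtain ⟨u, hu, huv⟩ := (hA 1 s).mpr h1
        rw [huv]; simpa [hgdef] using hu
      · intro ht
        set y : G := σ⁻¹ (t * g) with hy
        have hσy : σ y = t * g := by simp [hy]
        have h1 : cayAdj S (σ 1) (σ y) := ⟨t, ht, by rw [hσy, hgdef]⟩
        obtain ⟨u, hu, huv⟩ := (hA 1 y).mp h1
        refine ⟨u, hu, ?_⟩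
        have : y = u := by simpa using huv
        rw [← this, hσy]; group
    · rintro ⟨φ, g, hφS, hσ⟩
      have hσinv : ∀ y : G, σ⁻¹ y = φ⁻¹ (y * g⁻¹) := by
        intro y
        rw [Equiv.Perm.inv_eq_iff_eq, hσ]
        simp
      constructor
      · -- σ is in the normalizer of the regular representation
        rw [Subgroup.mem_normalizer_iff]
        intro ρ
        constructor
        · rintro ⟨h, hh⟩
          refine ⟨g⁻¹ * φ h * g, fun x => ?_⟩
          simp only [Equiv.Perm.mul_apply]
          rw [hσinv, hh, hσ, map_mul]
          simp [mul_assoc]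
        · rintro ⟨k, hk⟩
          refine ⟨φ⁻¹ (g * k * g⁻¹), fun x => ?_⟩
          have := hk (σ x)
          simp only [Equiv.Perm.mul_apply] at this
          have h2 : ρ x = σ⁻¹ (σ x * k) := by
            rw [← this]; simp
          rw [h2, hσinv, hσ]
          have : φ x * g * k * g⁻¹ = φ x * (g * k * g⁻¹) := by group
          rw [this, map_mul]
          simp
      · -- σ is an automorphism of the Cayley digraph
        intro x y
        constructor
        · rintro ⟨s, hs, h⟩
          rw [hσ, hσ] at h
          obtain ⟨u, hu, hus⟩ : s ∈ ⇑φ '' S := by rw [hφS]; exact hs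
          refine ⟨u, hu, ?_⟩
          have h3 : φ y * g = (s * φ x) * g := by rw [h]; group
          have h4 : φ y = s * φ x := mul_right_cancel h3
          have h2 : φ y = φ (u * x) := by rw [map_mul, hus, h4]
          exact φ.injective h2
        · rintro ⟨s, hs, h⟩
          have hφs : φ s ∈ S := by rw [← hφS]; exact ⟨s, hs, rfl⟩
          refine ⟨φ s, hφs, ?_⟩
          rw [hσ, hσ, h, map_mul]
          group
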